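/- Let β > 0, ρ_z > 0, J ⊆ {1,…,m}, x^{k+1} ∈ ℝ^p, and z^k, z* ∈ ℝ^m with z^k ≥ 0 componentwise, and set z_j^{k+1} = z_j^k + ρ_z·max(−z_j^k/β, f_j(x^{k+1})) for all j. Suppose β f_j(x^{k+1}) + z_j^k > 0 for all j ∈ J, β f_j(x^{k+1}) + z_j^k < 0 for all j ∉ J, and z_j* = 0 for all j ∉ J. Then ∑_{j=1}^m (z_j^{k+1} − z_j*)·max(−z_j^k/β, f_j(x^{k+1})) ≤ (1/ρ_z)‖z^{k+1} − z^k‖² + ∑_{j∈J}(z_j^k − z_j*) f_j(x^{k+1}). -/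

import Mathlib

noncomputable section

/-- Lemma z-zs: under the stated sign conditions on the `z`-update,
`∑_j (z_j^{k+1} − z_j*) max(−z_j^k/β, f_j(x^{k+1}))
  ≤ (1/ρ_z)‖z^{k+1} − z^k‖² + ∑_{j∈J}(z_j^k − z_j*) f_j(x^{k+1})`. -/
theorem stmt14 {p m : ℕ} (β ρz : ℝ) (hβ : 0 < β) (hρz : 0 < ρz) (J : Finset (Fin m))
    (f : Fin m → EuclideanSpace ℝ (Fin p) → ℝ)
    (xk1 : EuclideanSpace ℝ (Fin p)) (zk zk1 zs : EuclideanSpace ℝ (Fin m))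
    (hzk : ∀ j, 0 ≤ zk j)
    (hz : ∀ j, zk1 j = zk j + ρz * max (-(zk j) / β) (f j xk1))
    (hJin : ∀ j ∈ J, 0 < β * f j xk1 + zk j)
    (hJout : ∀ j ∉ J, β * f j xk1 + zk j < 0)
    (hzsout : ∀ j ∉ J, zs j = 0) :
    ∑ j, (zk1 j - zs j) * max (-(zk j) / β) (f j xk1)
      ≤ 1 / ρz * ‖zk1 - zk‖ ^ 2 + ∑ j ∈ J, (zk j - zs j) * f j xk1 := by
  set M : Fin m → ℝ := fun j => max (-(zk j) / β) (f j xk1) with hM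
  have hsub : ∀ j, (zk1 - zk) j = ρz * M j := by
    intro j
    have : (zk1 - zk) j = zk1 j - zk j := rfl
    rw [this, hz j]; ring
  have hnorm : ‖zk1 - zk‖ ^ 2 = ∑ j, (ρz * M j) ^ 2 := by
    rw [EuclideanSpace.norm_eq, Real.sq_sqrt (by positivity)]
    exact Finset.sum_congr rfl fun j _ => by rw [hsub j, Real.norm_eq_abs, sq_abs]
  have hrhs : 1 / ρz * ‖zk1 - zk‖ ^ 2 = ρz * ∑ j, (M j) ^ 2 := by
    rw [hnorm, Finset.mul_sum, Finset.mul_sum]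
    refine Finset.sum_congr rfl fun j _ => ?_
    field_simp
  have key : ∑ j, (zk j - zs j) * M j ≤ ∑ j ∈ J, (zk j - zs j) * f j xk1 := by
    rw [← Finset.sum_add_sum_compl J (fun j => (zk j - zs j) * M j)]
    have h1 : ∑ j ∈ J, (zk j - zs j) * M j = ∑ j ∈ J, (zk j - zs j) * f j xk1 := by
      refine Finset.sum_congr rfl fun j hj => ?_
      have hle : -(zk j) / β ≤ f j xk1 := by
        rw [div_le_iff₀ hβ]
        have := hJin j hj; nlinarith
      rw [hM]; simp [max_eq_right hle]
    have h2 : ∑ j ∈ Jᶜ, (zk j - zs j) * M j ≤ 0 := by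
      refine Finset.sum_nonpos fun j hj => ?_
      have hjn : j ∉ J := Finset.mem_compl.mp hj
      have hle : f j xk1 ≤ -(zk j) / β := by
        rw [le_div_iff₀ hβ]
        have := hJout j hjn; nlinarith
      have hM0 : M j = -(zk j) / β := by rw [hM]; simp [max_eq_left hle]
      rw [hM0, hzsout j hjn]
      have : -(zk j) / β ≤ 0 := div_nonpos_of_nonpos_of_nonneg (by linarith [hzk j]) hβ.le
      have := hzk j
      nlinarith
    linarith
  have expand : ∑ j, (zk1 j - zs j) * M j
      = ∑ j, (zk j - zs j) * M j + ρz * ∑ j, (M j) ^ 2 := by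
    rw [Finset.mul_sum, ← Finset.sum_add_distrib]
    refine Finset.sum_congr rfl fun j _ => ?_
    rw [hz j]; ring
  calc ∑ j, (zk1 j - zs j) * M j
      = ∑ j, (zk j - zs j) * M j + ρz * ∑ j, (M j) ^ 2 := expand
    _ ≤ ∑ j ∈ J, (zk j - zs j) * f j xk1 + ρz * ∑ j, (M j) ^ 2 := by linarith
    _ = 1 / ρz * ‖zk1 - zk‖ ^ 2 + ∑ j ∈ J, (zk j - zs j) * f j xk1 := by rw [hrhs]; ring

end
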